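/- Let e be an edge of a hypergraph system and f ∈ L_1(X, B_e, μ). Then the cut norm satisfies ‖f‖_{S_{∂e}} ≤ ( ∫ ∏_{ω ∈ {0,1}^e} 𝐟(x_e^{(ω)}) dμ_e^2 )^{1/2^{|e|}}, i.e., the cut norm is bounded by the Gowers box norm of f. -/

import Mathlib

open MeasureTheory ENNReal

/-- `A ⊆ ∏ i, X i` depends only on the coordinates in `e`. -/
def DependsOnSet {n : ℕ} {X : Fin n → Type*} (e : Finset (Fin n)) (A : Set (∀ i, X i)) : Prop :=
  ∀ x y : ∀ i, X i, (∀ i ∈ e, x i = y i) → (x ∈ A ↔ y ∈ A)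

/-- A function on `∏ i, X i` depending only on the coordinates in `e`. -/
def DependsOnF {n : ℕ} {X : Fin n → Type*} (e : Finset (Fin n)) (f : (∀ i, X i) → ℝ) : Prop :=
  ∀ x y : ∀ i, X i, (∀ i ∈ e, x i = y i) → f x = f y

/-- `A` belongs to `B_e`: it is measurable and depends only on the coordinates in `e`. -/
def CubeSet {n : ℕ} {X : Fin n → Type*} [∀ i, MeasurableSpace (X i)]
    (e : Finset (Fin n)) (A : Set (∀ i, X i)) : Prop :=
  MeasurableSet A ∧ DependsOnSet e A

/-- The boundary `∂e` of `e`: subsets of `e` of size `|e| - 1`. -/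
def bdry {n : ℕ} (e : Finset (Fin n)) : Finset (Finset (Fin n)) :=
  e.powerset.filter (fun e' => e'.card + 1 = e.card)

/-- `A ∈ S_{∂e}`: `A` is an intersection `⋂_{e' ∈ ∂e} A_{e'}` with `A_{e'} ∈ B_{e'}`. -/
def SPartial {n : ℕ} {X : Fin n → Type*} [∀ i, MeasurableSpace (X i)]
    (e : Finset (Fin n)) (A : Set (∀ i, X i)) : Prop :=
  ∃ F : Finset (Fin n) → Set (∀ i, X i),
    (∀ e' ∈ bdry e, CubeSet e' (F e')) ∧ A = ⋂ e' ∈ bdry e, F e'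

section GowersAux

open Function

variable {n : ℕ} {X : Fin n → Type*} [∀ i, MeasurableSpace (X i)]

/-- Merge two points: take `z.2` on coordinates in `S`, `z.1` elsewhere. -/
def mrg (S : Finset (Fin n)) (z : (∀ i, X i) × (∀ i, X i)) : ∀ i, X i :=
  fun i => if i ∈ S then z.2 i else z.1 i

lemma measurable_mrg (S : Finset (Fin n)) : Measurable (mrg (X := X) S) :=
  measurable_pi_lambda _ fun i => by
    by_cases h : i ∈ S
    · simpa [mrg, h, Function.comp_def] using (measurable_pi_apply i).comp measurable_snd
    · simpa [mrg, h, Function.comp_def] using (measurable_pi_apply i).comp measurable_fst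

lemma mrg_empty (z : (∀ i, X i) × (∀ i, X i)) : mrg ∅ z = z.1 :=
  funext fun i => by simp [mrg]

lemma mrg_upd₁ {S : Finset (Fin n)} {j : Fin n} (hj : j ∉ S) (t : X j) (x y : ∀ i, X i) :
    mrg S (update x j t, y) = update (mrg S (x, y)) j t := by
  funext i
  by_cases hij : i = j
  · subst hij
    simp [mrg, hj]
  · simp [mrg, update_of_ne hij]

lemma mrg_upd₂ {S : Finset (Fin n)} {j : Fin n} (hj : j ∉ S) (t t' : X j) (x y : ∀ i, X i) :
    mrg S (update x j t, update y j t') = update (mrg S (x, y)) j t := by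
  funext i
  by_cases hij : i = j
  · subst hij
    simp [mrg, hj]
  · by_cases hiS : i ∈ S <;> simp [mrg, hiS, update_of_ne hij]

lemma mrg_upd₃ {S : Finset (Fin n)} {j : Fin n} (hj : j ∉ S) (t t' : X j) (x y : ∀ i, X i) :
    mrg (insert j S) (update x j t, update y j t') = update (mrg S (x, y)) j t' := by
  funext i
  by_cases hij : i = j
  · subst hij
    simp [mrg]
  · by_cases hiS : i ∈ S <;>
      simp [mrg, hiS, update_of_ne hij, Finset.mem_insert, hij]

lemma prod_powerset_insert' {β : Type*} [CommMonoid β] {j : Fin n} {T : Finset (Fin n)}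
    (hj : j ∉ T) (h : Finset (Fin n) → β) :
    ∏ S ∈ (insert j T).powerset, h S
      = (∏ S ∈ T.powerset, h S) * ∏ S ∈ T.powerset, h (insert j S) := by
  classical
  rw [Finset.powerset_insert, Finset.prod_union, Finset.prod_image]
  · intro S hS S' hS' hSS'
    have hjS : j ∉ S := fun hh => hj (Finset.mem_powerset.mp hS hh)
    have hjS' : j ∉ S' := fun hh => hj (Finset.mem_powerset.mp hS' hh)
    rw [← Finset.erase_insert hjS, ← Finset.erase_insert hjS', hSS']
  · rw [Finset.disjoint_right]
    rintro S hS hS'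
    obtain ⟨S₀, _, rfl⟩ := Finset.mem_image.mp hS
    exact (fun hh => hj (Finset.mem_powerset.mp hS' hh)) (Finset.mem_insert_self j S₀)

variable (μ : ∀ i, Measure (X i)) [∀ i, IsProbabilityMeasure (μ i)]

/-- The doubled measure. -/
noncomputable abbrev M2 : Measure ((∀ i, X i) × (∀ i, X i)) :=
  (Measure.pi μ).prod (Measure.pi μ)

lemma mp_congr {α β : Type*} [MeasurableSpace α] [MeasurableSpace β] {ν₁ : Measure α}
    {ν₂ : Measure β} {φ ψ : α → β} (h : MeasurePreserving ψ ν₁ ν₂) (he : ∀ x, φ x = ψ x) :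
    MeasurePreserving φ ν₁ ν₂ := by
  have : φ = ψ := funext he
  rwa [this]

lemma mp_update (j : Fin n) :
    MeasurePreserving (fun p : X j × (∀ i, X i) => update p.2 j p.1)
      ((μ j).prod (Measure.pi μ)) (Measure.pi μ) := by
  have hm : Measurable (fun p : X j × (∀ i, X i) => update p.2 j p.1) :=
    measurable_update'.comp (measurable_snd.prodMk measurable_fst)
  refine ⟨hm, ?_⟩
  refine (Measure.pi_eq fun s hs => ?_).symm
  rw [Measure.map_apply hm (MeasurableSet.univ_pi hs)]
  have hpre : (fun p : X j × (∀ i, X i) => update p.2 j p.1) ⁻¹' (Set.pi Set.univ s)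
      = (s j) ×ˢ (Set.pi Set.univ fun i => if hij : i = j then Set.univ else s i) := by
    ext p
    simp only [Set.mem_preimage, Set.mem_pi, Set.mem_univ, forall_true_left, Set.mem_prod]
    constructor
    · intro h
      refine ⟨by simpa using h j, fun i => ?_⟩
      by_cases hij : i = j
      · simp [hij]
      · rw [dif_neg hij]
        simpa [update_of_ne hij] using h i
    · rintro ⟨h1, h2⟩ i
      by_cases hij : i = j
      · subst hij; simpa using h1
      · have := h2 i
        rw [dif_neg hij] at this
        simpa [update_of_ne hij] using this
  rw [hpre, Measure.prod_prod, Measure.pi_pi]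
  have hfac : ∀ i, μ i (if hij : i = j then Set.univ else s i)
      = if i = j then 1 else μ i (s i) := by
    intro i; split_ifs <;> simp
  rw [Finset.prod_congr rfl fun i _ => hfac i]
  have h1 : ∏ i, (if i = j then (1 : ℝ≥0∞) else μ i (s i))
      = ∏ i ∈ Finset.univ.erase j, μ i (s i) := by
    rw [← Finset.mul_prod_erase Finset.univ _ (Finset.mem_univ j), if_pos rfl, one_mul]
    exact Finset.prod_congr rfl fun i hi => if_neg (Finset.ne_of_mem_erase hi)
  have h2 : ∏ i, μ i (s i) = μ j (s j) * ∏ i ∈ Finset.univ.erase j, μ i (s i) :=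
    (Finset.mul_prod_erase Finset.univ _ (Finset.mem_univ j)).symm
  rw [h1, h2]

lemma mp_phi1 (j : Fin n) :
    MeasurePreserving
      (fun p : X j × ((∀ i, X i) × (∀ i, X i)) => (update p.2.1 j p.1, p.2.2))
      ((μ j).prod (M2 μ)) (M2 μ) := by
  have h1 := (measurePreserving_prodAssoc (μ j) (Measure.pi μ) (Measure.pi μ)).symm
    (MeasurableEquiv.prodAssoc)
  have h2 := (mp_update μ j).prod (MeasurePreserving.id (Measure.pi μ))
  exact mp_congr (h2.comp h1) fun p => rfl

lemma mp_phi2 (j : Fin n) :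
    MeasurePreserving
      (fun p : (X j × X j) × ((∀ i, X i) × (∀ i, X i)) =>
        (update p.2.1 j p.1.1, update p.2.2 j p.1.2))
      (((μ j).prod (μ j)).prod (M2 μ)) (M2 μ) := by
  have hκin : MeasurePreserving
      (fun q : X j × ((∀ i, X i) × (∀ i, X i)) => (q.2.1, (q.1, q.2.2)))
      ((μ j).prod (M2 μ)) ((Measure.pi μ).prod ((μ j).prod (Measure.pi μ))) := by
    have a1 := (measurePreserving_prodAssoc (μ j) (Measure.pi μ) (Measure.pi μ)).symm
      (MeasurableEquiv.prodAssoc)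
    have a2 := (Measure.measurePreserving_swap (μ := μ j) (ν := Measure.pi μ)).prod
      (MeasurePreserving.id (Measure.pi μ))
    have a3 := measurePreserving_prodAssoc (Measure.pi μ) (μ j) (Measure.pi μ)
    exact mp_congr ((a3.comp a2).comp a1) fun q => rfl
  have hκ : MeasurePreserving
      (fun q : X j × ((∀ i, X i) × (∀ i, X i)) => (q.2.1, update q.2.2 j q.1))
      ((μ j).prod (M2 μ)) (M2 μ) := by
    have b := (MeasurePreserving.id (Measure.pi μ)).prod (mp_update μ j)
    exact mp_congr (b.comp hκin) fun q => rfl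
  have c1 := measurePreserving_prodAssoc (μ j) (μ j) (M2 μ)
  have c2 := (MeasurePreserving.id (μ j)).prod hκ
  have c3 := mp_phi1 μ j
  exact mp_congr ((c3.comp c2).comp c1) fun p => rfl

lemma mp_integral {α β : Type*} [MeasurableSpace α] [MeasurableSpace β] {ν₁ : Measure α}
    {ν₂ : Measure β} {φ : α → β} (h : MeasurePreserving φ ν₁ ν₂) {g : β → ℝ}
    (hg : AEStronglyMeasurable g ν₂) :
    ∫ x, g (φ x) ∂ν₁ = ∫ y, g y ∂ν₂ := by
  rw [← h.map_eq] at hg ⊢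
  exact (integral_map h.measurable.aemeasurable hg).symm

lemma mp_integrable {α β : Type*} [MeasurableSpace α] [MeasurableSpace β] {ν₁ : Measure α}
    {ν₂ : Measure β} {φ : α → β} (h : MeasurePreserving φ ν₁ ν₂) {g : β → ℝ}
    (hg : Integrable g ν₂) :
    Integrable (fun x => g (φ x)) ν₁ := by
  have hm : AEStronglyMeasurable g (Measure.map φ ν₁) := h.map_eq.symm ▸ hg.aestronglyMeasurable
  have := (integrable_map_measure hm h.measurable.aemeasurable).mp (h.map_eq.symm ▸ hg)
  exact this

variable {f : (∀ i, X i) → ℝ}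

/-- The box-integrand built from `|f|`, in `ℝ≥0∞`. -/
noncomputable def Lfun (f : (∀ i, X i) → ℝ) (T : Finset (Fin n))
    (z : (∀ i, X i) × (∀ i, X i)) : ℝ≥0∞ :=
  ∏ S ∈ T.powerset, (‖f (mrg S z)‖₊ : ℝ≥0∞)

lemma measurable_Lfun (hf : Measurable f) (T : Finset (Fin n)) :
    Measurable (Lfun f T) :=
  Finset.measurable_prod _ fun S _ => (hf.comp (measurable_mrg S)).nnnorm.coe_nnreal_ennreal

lemma L_step (hf : Measurable f) {j : Fin n} {T : Finset (Fin n)} (hj : j ∉ T) :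
    ∫⁻ z, Lfun f T z ∂(M2 μ) ≤ (∫⁻ z, Lfun f (insert j T) z ∂(M2 μ)) ^ ((1:ℝ)/2) := by
  classical
  set u : X j × ((∀ i, X i) × (∀ i, X i)) → ℝ≥0∞ :=
    fun p => ∏ S ∈ T.powerset, (‖f (update (mrg S p.2) j p.1)‖₊ : ℝ≥0∞) with hu
  have hmupd : ∀ S : Finset (Fin n),
      Measurable (fun p : X j × ((∀ i, X i) × (∀ i, X i)) => update (mrg S p.2) j p.1) :=
    fun S => measurable_update'.comp
      (((measurable_mrg S).comp measurable_snd).prodMk measurable_fst)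
  have hum : Measurable u :=
    Finset.measurable_prod _ fun S _ => (hf.comp (hmupd S)).nnnorm.coe_nnreal_ennreal
  have hjS : ∀ {S : Finset (Fin n)}, S ∈ T.powerset → j ∉ S :=
    fun {S} hS hh => hj (Finset.mem_powerset.mp hS hh)
  have hA : ∫⁻ z, Lfun f T z ∂(M2 μ) = ∫⁻ p, u p ∂((μ j).prod (M2 μ)) := by
    rw [← (mp_phi1 μ j).lintegral_comp (measurable_Lfun hf T)]
    refine lintegral_congr fun p => ?_
    refine Finset.prod_congr rfl fun S hS => ?_
    rw [show mrg S (update p.2.1 j p.1, p.2.2) = update (mrg S p.2) j p.1 from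
      mrg_upd₁ (hjS hS) p.1 p.2.1 p.2.2]
  set v : ((∀ i, X i) × (∀ i, X i)) → ℝ≥0∞ := fun w => ∫⁻ t, u (t, w) ∂(μ j) with hv
  have hvm : Measurable v := hum.lintegral_prod_left'
  have husec : ∀ w, Measurable fun t : X j => u (t, w) :=
    fun w => hum.comp (measurable_id.prodMk measurable_const)
  have hB : ∫⁻ p, u p ∂((μ j).prod (M2 μ)) = ∫⁻ w, v w ∂(M2 μ) := by
    rw [lintegral_prod _ hum.aemeasurable]
    exact lintegral_lintegral_swap hum.aemeasurable
  have hbig : Measurable (fun q : (X j × X j) × ((∀ i, X i) × (∀ i, X i)) =>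
      u (q.1.1, q.2) * u (q.1.2, q.2)) := by
    apply Measurable.mul
    · exact hum.comp ((measurable_fst.comp measurable_fst).prodMk measurable_snd)
    · exact hum.comp ((measurable_snd.comp measurable_fst).prodMk measurable_snd)
  have hD : ∀ w, v w ^ (2:ℝ) = ∫⁻ s, u (s.1, w) * u (s.2, w) ∂((μ j).prod (μ j)) := by
    intro w
    rw [show (2:ℝ) = ((2:ℕ):ℝ) by norm_num, ENNReal.rpow_natCast, pow_two]
    exact (lintegral_prod_mul (husec w).aemeasurable (husec w).aemeasurable).symm
  have hC : ∫⁻ w, v w ∂(M2 μ) ≤ (∫⁻ w, v w ^ (2:ℝ) ∂(M2 μ)) ^ ((1:ℝ)/2) := by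
    have hconj : Real.HolderConjugate 2 2 := Real.HolderConjugate.two_two
    have := ENNReal.lintegral_mul_le_Lp_mul_Lq (M2 μ) hconj hvm.aemeasurable
      (aemeasurable_const (b := (1:ℝ≥0∞)))
    simp only [Pi.mul_apply, mul_one, ENNReal.one_rpow, lintegral_const, measure_univ,
      one_mul] at this
    simpa using this
  have hE : ∫⁻ w, v w ^ (2:ℝ) ∂(M2 μ) = ∫⁻ z, Lfun f (insert j T) z ∂(M2 μ) := by
    have hbig2 : Measurable (fun q : (X j × X j) × ((∀ i, X i) × (∀ i, X i)) =>
        u (q.1.1, q.2) * u (q.1.2, q.2)) := hbig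
    calc ∫⁻ w, v w ^ (2:ℝ) ∂(M2 μ)
        = ∫⁻ w, ∫⁻ s, u (s.1, w) * u (s.2, w) ∂((μ j).prod (μ j)) ∂(M2 μ) :=
          lintegral_congr hD
      _ = ∫⁻ s, ∫⁻ w, u (s.1, w) * u (s.2, w) ∂(M2 μ) ∂((μ j).prod (μ j)) :=
          (lintegral_lintegral_swap hbig2.aemeasurable).symm
      _ = ∫⁻ q, u (q.1.1, q.2) * u (q.1.2, q.2) ∂(((μ j).prod (μ j)).prod (M2 μ)) :=
          (lintegral_prod _ hbig2.aemeasurable).symm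
      _ = ∫⁻ z, Lfun f (insert j T) z ∂(M2 μ) := by
          rw [← (mp_phi2 μ j).lintegral_comp (measurable_Lfun hf (insert j T))]
          refine lintegral_congr fun q => ?_
          show u (q.1.1, q.2) * u (q.1.2, q.2) = Lfun f (insert j T) _
          rw [Lfun, prod_powerset_insert' hj]
          congr 1
          · refine Finset.prod_congr rfl fun S hS => ?_
            rw [show mrg S (update q.2.1 j q.1.1, update q.2.2 j q.1.2)
                = update (mrg S q.2) j q.1.1 from mrg_upd₂ (hjS hS) _ _ _ _]
          · refine Finset.prod_congr rfl fun S hS => ?_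
            rw [show mrg (insert j S) (update q.2.1 j q.1.1, update q.2.2 j q.1.2)
                = update (mrg S q.2) j q.1.2 from mrg_upd₃ (hjS hS) _ _ _ _]
  calc ∫⁻ z, Lfun f T z ∂(M2 μ) = ∫⁻ w, v w ∂(M2 μ) := by rw [hA, hB]
    _ ≤ (∫⁻ w, v w ^ (2:ℝ) ∂(M2 μ)) ^ ((1:ℝ)/2) := hC
    _ = (∫⁻ z, Lfun f (insert j T) z ∂(M2 μ)) ^ ((1:ℝ)/2) := by rw [hE]

lemma L_fin (hf : Measurable f) {e : Finset (Fin n)}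
    (hbox' : ∫⁻ z, Lfun f e z ∂(M2 μ) ≠ ⊤) :
    ∀ d : ℕ, ∀ T ⊆ e, e.card - T.card ≤ d → ∫⁻ z, Lfun f T z ∂(M2 μ) ≠ ⊤ := by
  intro d
  induction d with
  | zero =>
    intro T hT hd
    have : T = e := Finset.eq_of_subset_of_card_le hT (by omega)
    rw [this]; exact hbox'
  | succ d ih =>
    intro T hT hd
    by_cases hTe : T = e
    · rw [hTe]; exact hbox'
    · obtain ⟨j, hje, hjT⟩ := Finset.exists_of_ssubset (hT.ssubset_of_ne hTe)
      have hcard : T.card < e.card := Finset.card_lt_card (hT.ssubset_of_ne hTe)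
      have h1 : insert j T ⊆ e := Finset.insert_subset hje hT
      have h2 : e.card - (insert j T).card ≤ d := by
        rw [Finset.card_insert_of_notMem hjT]; omega
      have hfin := ih (insert j T) h1 h2
      exact ne_top_of_le_ne_top (ENNReal.rpow_ne_top_of_nonneg (by norm_num) hfin)
        (L_step μ hf hjT)

/-- The main integrand: product over subsets of `T` of `f` times remaining cut factors. -/
noncomputable def Phi (e : Finset (Fin n)) (f : (∀ i, X i) → ℝ)
    (g : Fin n → (∀ i, X i) → ℝ) (T : Finset (Fin n))
    (z : (∀ i, X i) × (∀ i, X i)) : ℝ :=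
  ∏ S ∈ T.powerset, (f (mrg S z) * ∏ k ∈ e \ T, g k (mrg S z))

lemma nnnorm_prod_mul_le {ι : Type*} (s : Finset ι) (a : ι → ℝ) (b : ι → ℝ)
    (hb : ∀ i, |b i| ≤ 1) :
    (‖∏ i ∈ s, (a i * b i)‖₊ : ℝ≥0∞) ≤ ∏ i ∈ s, (‖a i‖₊ : ℝ≥0∞) := by
  rw [nnnorm_prod, ENNReal.coe_finset_prod]
  refine Finset.prod_le_prod' fun i _ => ?_
  rw [nnnorm_mul, ENNReal.coe_mul]
  have hb1 : (‖b i‖₊ : ℝ≥0∞) ≤ 1 := by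
    rw [← ENNReal.coe_one, ENNReal.coe_le_coe, ← NNReal.coe_le_coe, NNReal.coe_one,
      coe_nnnorm, Real.norm_eq_abs]
    exact hb i
  calc (‖a i‖₊ : ℝ≥0∞) * ‖b i‖₊ ≤ (‖a i‖₊ : ℝ≥0∞) * 1 :=
        mul_le_mul_right hb1 _
    _ = ‖a i‖₊ := mul_one _

variable {e : Finset (Fin n)} {g : Fin n → (∀ i, X i) → ℝ}

lemma measurable_Phi (hf : Measurable f) (hg : ∀ k, Measurable (g k))
    (T : Finset (Fin n)) : Measurable (Phi e f g T) :=
  Finset.measurable_prod _ fun S _ =>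
    (hf.comp (measurable_mrg S)).mul
      (Finset.measurable_prod _ fun k _ => (hg k).comp (measurable_mrg S))

lemma Phi_nnnorm_le (hgb : ∀ k x, |g k x| ≤ 1) (T : Finset (Fin n))
    (z : (∀ i, X i) × (∀ i, X i)) :
    (‖Phi e f g T z‖₊ : ℝ≥0∞) ≤ Lfun f T z := by
  refine nnnorm_prod_mul_le _ _ _ fun S => ?_
  rw [Finset.abs_prod]
  exact Finset.prod_le_one (fun k _ => abs_nonneg _) fun k _ => hgb k _

lemma integrable_Phi (hf : Measurable f) (hg : ∀ k, Measurable (g k))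
    (hgb : ∀ k x, |g k x| ≤ 1)
    (hbox' : ∫⁻ z, Lfun f e z ∂(M2 μ) ≠ ⊤) {T : Finset (Fin n)} (hT : T ⊆ e) :
    Integrable (Phi e f g T) (M2 μ) := by
  refine ⟨(measurable_Phi hf hg T).aestronglyMeasurable, ?_⟩
  rw [hasFiniteIntegral_def]
  calc ∫⁻ z, (‖Phi e f g T z‖₊ : ℝ≥0∞) ∂(M2 μ)
      ≤ ∫⁻ z, Lfun f T z ∂(M2 μ) := lintegral_mono (Phi_nnnorm_le hgb T)
    _ < ⊤ := (L_fin μ hf hbox' e.card T hT (by omega)).lt_top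

lemma sq_integral_abs_le {α : Type*} [MeasurableSpace α] {ν : Measure α}
    [IsProbabilityMeasure ν] {h : α → ℝ} (h1 : Integrable h ν)
    (h2 : Integrable (fun w => h w ^ 2) ν) :
    (∫ w, |h w| ∂ν) ^ 2 ≤ ∫ w, h w ^ 2 ∂ν := by
  set c := ∫ w, |h w| ∂ν with hc
  have habs : Integrable (fun w => |h w|) ν := h1.abs
  have expand : ∀ w, (|h w| - c) ^ 2 = h w ^ 2 - 2 * c * |h w| + c ^ 2 := by
    intro w; rw [sub_sq, sq_abs]; ring
  have hcm : Integrable (fun w => 2 * c * |h w|) ν := habs.const_mul (2 * c)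
  have hint2 : Integrable (fun w => h w ^ 2 - 2 * c * |h w|) ν := h2.sub hcm
  have h0 : 0 ≤ ∫ w, (|h w| - c) ^ 2 ∂ν := integral_nonneg fun w => sq_nonneg _
  have heq : ∫ w, (|h w| - c) ^ 2 ∂ν = ∫ w, h w ^ 2 ∂ν - c ^ 2 := by
    have e1 : ∫ w, (|h w| - c) ^ 2 ∂ν = ∫ w, ((h w ^ 2 - 2 * c * |h w|) + c ^ 2) ∂ν :=
      integral_congr_ae (Filter.Eventually.of_forall expand)
    rw [e1, integral_add hint2 (integrable_const _), integral_sub h2 hcm,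
      integral_const_mul, integral_const]
    simp only [measure_univ, ENNReal.toReal_one, smul_eq_mul, one_mul, probReal_univ]
    rw [← hc]
    ring
  nlinarith [h0, heq]

lemma J_step (hf : Measurable f) (hbox' : ∫⁻ z, Lfun f e z ∂(M2 μ) ≠ ⊤)
    (hg : ∀ k, Measurable (g k)) (hgb : ∀ k x, |g k x| ≤ 1)
    (hginv : ∀ k ∈ e, ∀ (x : ∀ i, X i) (t : X k), g k (update x k t) = g k x)
    {T : Finset (Fin n)} (hT : T ⊆ e) {j : Fin n} (hje : j ∈ e) (hjT : j ∉ T) :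
    (∫ z, Phi e f g T z ∂(M2 μ)) ^ 2 ≤ ∫ z, Phi e f g (insert j T) z ∂(M2 μ) := by
  classical
  set ρ := μ j with hρ
  set P : X j × ((∀ i, X i) × (∀ i, X i)) → ℝ :=
    fun p => ∏ S ∈ T.powerset,
      (f (update (mrg S p.2) j p.1) * ∏ k ∈ e \ insert j T, g k (update (mrg S p.2) j p.1))
    with hPdef
  set Q : ((∀ i, X i) × (∀ i, X i)) → ℝ := fun w => ∏ S ∈ T.powerset, g j (mrg S w) with hQdef
  have hjS : ∀ {S : Finset (Fin n)}, S ∈ T.powerset → j ∉ S :=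
    fun {S} hS hh => hjT (Finset.mem_powerset.mp hS hh)
  have hmupd : ∀ S : Finset (Fin n),
      Measurable (fun p : X j × ((∀ i, X i) × (∀ i, X i)) => update (mrg S p.2) j p.1) :=
    fun S => measurable_update'.comp
      (((measurable_mrg S).comp measurable_snd).prodMk measurable_fst)
  have hPm : Measurable P :=
    Finset.measurable_prod _ fun S _ =>
      ((hf.comp (hmupd S)).mul
        (Finset.measurable_prod _ fun k _ => (hg k).comp (hmupd S)))
  have hQm : Measurable Q :=
    Finset.measurable_prod _ fun S _ => (hg j).comp (measurable_mrg S)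
  have hQb : ∀ w, |Q w| ≤ 1 := fun w => by
    rw [hQdef]
    simp only
    rw [Finset.abs_prod]
    exact Finset.prod_le_one (fun k _ => abs_nonneg _) fun k _ => hgb j _
  have hsplit : insert j (e \ insert j T) = e \ T := by
    ext k
    simp only [Finset.mem_insert, Finset.mem_sdiff]
    constructor
    · rintro (rfl | ⟨hk, hk2⟩)
      · exact ⟨hje, hjT⟩
      · exact ⟨hk, fun h => hk2 (Or.inr h)⟩
    · rintro ⟨hk, hk2⟩
      by_cases hkj : k = j
      · exact Or.inl hkj
      · exact Or.inr ⟨hk, fun h => h.elim hkj hk2⟩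
  have hjnot : j ∉ e \ insert j T := fun h =>
    (Finset.mem_sdiff.mp h).2 (Finset.mem_insert_self _ _)
  have fact1 : ∀ p : X j × ((∀ i, X i) × (∀ i, X i)),
      Phi e f g T (update p.2.1 j p.1, p.2.2) = P p * Q p.2 := by
    intro p
    rw [hPdef, hQdef]
    simp only
    rw [Phi, ← Finset.prod_mul_distrib]
    refine Finset.prod_congr rfl fun S hS => ?_
    rw [show mrg S (update p.2.1 j p.1, p.2.2) = update (mrg S p.2) j p.1 from
      mrg_upd₁ (hjS hS) _ _ _]
    rw [← hsplit, Finset.prod_insert hjnot, hginv j hje (mrg S p.2) p.1]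
    ring
  have fact2 : ∀ q : (X j × X j) × ((∀ i, X i) × (∀ i, X i)),
      Phi e f g (insert j T) (update q.2.1 j q.1.1, update q.2.2 j q.1.2)
        = P (q.1.1, q.2) * P (q.1.2, q.2) := by
    intro q
    rw [Phi, prod_powerset_insert' hjT]
    congr 1
    · refine Finset.prod_congr rfl fun S hS => ?_
      rw [show mrg S (update q.2.1 j q.1.1, update q.2.2 j q.1.2)
          = update (mrg S q.2) j q.1.1 from mrg_upd₂ (hjS hS) _ _ _ _]
    · refine Finset.prod_congr rfl fun S hS => ?_
      rw [show mrg (insert j S) (update q.2.1 j q.1.1, update q.2.2 j q.1.2)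
          = update (mrg S q.2) j q.1.2 from mrg_upd₃ (hjS hS) _ _ _ _]
  have hPhiT : Integrable (Phi e f g T) (M2 μ) := integrable_Phi μ hf hg hgb hbox' hT
  have hPhiT' : Integrable (Phi e f g (insert j T)) (M2 μ) :=
    integrable_Phi μ hf hg hgb hbox' (Finset.insert_subset hje hT)
  have hPQ : Integrable (fun p => P p * Q p.2) (ρ.prod (M2 μ)) := by
    have h := mp_integrable (mp_phi1 μ j) hPhiT
    exact h.congr (Filter.Eventually.of_forall fun p => fact1 p)
  have hPint : Integrable P (ρ.prod (M2 μ)) := by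
    refine ⟨hPm.aestronglyMeasurable, ?_⟩
    rw [hasFiniteIntegral_def]
    have hb : ∀ p : X j × ((∀ i, X i) × (∀ i, X i)),
        (‖P p‖₊ : ℝ≥0∞) ≤ Lfun f T (update p.2.1 j p.1, p.2.2) := by
      intro p
      have := nnnorm_prod_mul_le (T.powerset)
        (fun S => f (update (mrg S p.2) j p.1))
        (fun S => ∏ k ∈ e \ insert j T, g k (update (mrg S p.2) j p.1))
        (fun S => by
          rw [Finset.abs_prod]
          exact Finset.prod_le_one (fun k _ => abs_nonneg _) fun k _ => hgb k _)
      refine le_trans this (le_of_eq ?_)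
      refine Finset.prod_congr rfl fun S hS => ?_
      rw [show mrg S (update p.2.1 j p.1, p.2.2) = update (mrg S p.2) j p.1 from
        mrg_upd₁ (hjS hS) _ _ _]
    calc ∫⁻ p, (‖P p‖₊ : ℝ≥0∞) ∂(ρ.prod (M2 μ))
        ≤ ∫⁻ p, Lfun f T (update p.2.1 j p.1, p.2.2) ∂(ρ.prod (M2 μ)) := lintegral_mono hb
      _ = ∫⁻ z, Lfun f T z ∂(M2 μ) := (mp_phi1 μ j).lintegral_comp (measurable_Lfun hf T)
      _ < ⊤ := (L_fin μ hf hbox' e.card T hT (by omega)).lt_top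
  have hR : Integrable
      (fun q : (X j × X j) × ((∀ i, X i) × (∀ i, X i)) => P (q.1.1, q.2) * P (q.1.2, q.2))
      ((ρ.prod ρ).prod (M2 μ)) := by
    have h := mp_integrable (mp_phi2 μ j) hPhiT'
    exact h.congr (Filter.Eventually.of_forall fun q => fact2 q)
  set h : ((∀ i, X i) × (∀ i, X i)) → ℝ := fun w => ∫ t, P (t, w) ∂ρ with hhdef
  have hhint : Integrable h (M2 μ) := hPint.integral_prod_right
  have s1 : ∫ z, Phi e f g T z ∂(M2 μ) = ∫ p, P p * Q p.2 ∂(ρ.prod (M2 μ)) := by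
    rw [← mp_integral (mp_phi1 μ j) hPhiT.aestronglyMeasurable]
    exact integral_congr_ae (Filter.Eventually.of_forall fun p => fact1 p)
  have s2 : ∫ p, P p * Q p.2 ∂(ρ.prod (M2 μ)) = ∫ w, h w * Q w ∂(M2 μ) := by
    rw [integral_prod _ hPQ, integral_integral_swap hPQ]
    refine integral_congr_ae (Filter.Eventually.of_forall fun w => ?_)
    rw [hhdef]
    simp only
    rw [← integral_mul_const]
  have hhQ : Integrable (fun w => h w * Q w) (M2 μ) := by
    refine Integrable.mono' hhint.abs
      (hhint.aestronglyMeasurable.mul hQm.aestronglyMeasurable) ?_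
    refine Filter.Eventually.of_forall fun w => ?_
    rw [Real.norm_eq_abs, abs_mul]
    exact mul_le_of_le_one_right (abs_nonneg _) (hQb w)
  have s4 : |∫ w, h w * Q w ∂(M2 μ)| ≤ ∫ w, |h w| ∂(M2 μ) := by
    refine le_trans (le_of_eq (Real.norm_eq_abs _).symm) ?_
    refine le_trans (norm_integral_le_integral_norm _) ?_
    refine integral_mono hhQ.norm hhint.abs fun w => ?_
    rw [Real.norm_eq_abs, abs_mul]
    exact mul_le_of_le_one_right (abs_nonneg _) (hQb w)
  have hsq : ∀ w, h w ^ 2 = ∫ s, P (s.1, w) * P (s.2, w) ∂(ρ.prod ρ) := fun w => by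
    rw [pow_two]
    exact (integral_prod_mul (fun t => P (t, w)) (fun t => P (t, w))).symm
  have hh2int : Integrable (fun w => h w ^ 2) (M2 μ) := by
    have hk : Integrable (fun w => ∫ s, P (s.1, w) * P (s.2, w) ∂(ρ.prod ρ)) (M2 μ) :=
      hR.integral_prod_right
    exact hk.congr (Filter.Eventually.of_forall fun w => (hsq w).symm)
  have s5 : (∫ w, |h w| ∂(M2 μ)) ^ 2 ≤ ∫ w, h w ^ 2 ∂(M2 μ) :=
    sq_integral_abs_le hhint hh2int
  have s6 : ∫ w, h w ^ 2 ∂(M2 μ) = ∫ z, Phi e f g (insert j T) z ∂(M2 μ) := by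
    calc ∫ w, h w ^ 2 ∂(M2 μ)
        = ∫ w, ∫ s, P (s.1, w) * P (s.2, w) ∂(ρ.prod ρ) ∂(M2 μ) :=
          integral_congr_ae (Filter.Eventually.of_forall hsq)
      _ = ∫ s, ∫ w, P (s.1, w) * P (s.2, w) ∂(M2 μ) ∂(ρ.prod ρ) :=
          (integral_integral_swap hR).symm
      _ = ∫ q, P (q.1.1, q.2) * P (q.1.2, q.2) ∂((ρ.prod ρ).prod (M2 μ)) :=
          (integral_prod _ hR).symm
      _ = ∫ z, Phi e f g (insert j T) z ∂(M2 μ) := by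
          rw [← mp_integral (mp_phi2 μ j) hPhiT'.aestronglyMeasurable]
          exact integral_congr_ae (Filter.Eventually.of_forall fun q => (fact2 q).symm)
  calc (∫ z, Phi e f g T z ∂(M2 μ)) ^ 2
      = |∫ w, h w * Q w ∂(M2 μ)| ^ 2 := by rw [s1, s2, sq_abs]
    _ ≤ (∫ w, |h w| ∂(M2 μ)) ^ 2 := pow_le_pow_left₀ (abs_nonneg _) s4 2
    _ ≤ ∫ w, h w ^ 2 ∂(M2 μ) := s5
    _ = ∫ z, Phi e f g (insert j T) z ∂(M2 μ) := s6

end GowersAux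

/-- **Lemma 6.5 (cut norm ≤ Gowers box norm).** For `f ∈ L_1(X, B_e, μ)`,
`‖f‖_{S_{∂e}} ≤ (∫ ∏_{ω ∈ {0,1}^e} f(x_e^{(ω)}) dμ_e²)^{1/2^{|e|}}`; here the family
`{0,1}^e` is parametrized by subsets `S ⊆ e`, and `x^{(S)} i = z.2 i` for `i ∈ S`,
`x^{(S)} i = z.1 i` otherwise, for `z` in the product of two copies of the space. -/
theorem stmt9 {n : ℕ} {X : Fin n → Type*} [∀ i, MeasurableSpace (X i)]
    (μ : ∀ i, Measure (X i)) [∀ i, IsProbabilityMeasure (μ i)]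
    (e : Finset (Fin n)) (he : 2 ≤ e.card)
    (f : (∀ i, X i) → ℝ) (hfmeas : Measurable f) (hfdep : DependsOnF e f)
    (hfint : Integrable f (Measure.pi μ))
    (hbox : Integrable
      (fun z : (∀ i, X i) × (∀ i, X i) =>
        ∏ S ∈ e.powerset, f (fun i => if i ∈ S then z.2 i else z.1 i))
      ((Measure.pi μ).prod (Measure.pi μ))) :
    ∀ A : Set (∀ i, X i), SPartial e A →
      |∫ x in A, f x ∂(Measure.pi μ)|
        ≤ (∫ z : (∀ i, X i) × (∀ i, X i),
            ∏ S ∈ e.powerset, f (fun i => if i ∈ S then z.2 i else z.1 i)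
              ∂((Measure.pi μ).prod (Measure.pi μ))) ^ ((1 : ℝ) / 2 ^ e.card) := by
  classical
  rintro A ⟨F, hF, hA⟩
  set g : Fin n → (∀ i, X i) → ℝ :=
    fun k => if k ∈ e then (F (e.erase k)).indicator 1 else fun _ => 1 with hgdef
  have hbdry_mem : ∀ k ∈ e, e.erase k ∈ bdry e := by
    intro k hk
    simp only [bdry, Finset.mem_filter, Finset.mem_powerset]
    refine ⟨Finset.erase_subset _ _, ?_⟩
    rw [Finset.card_erase_of_mem hk]
    omega
  have hbdry_eq : ∀ e' ∈ bdry e, ∃ k ∈ e, e' = e.erase k := by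
    intro e' he'
    simp only [bdry, Finset.mem_filter, Finset.mem_powerset] at he'
    obtain ⟨hsub, hcard⟩ := he'
    have h1 : (e \ e').card = 1 := by rw [Finset.card_sdiff_of_subset hsub]; omega
    obtain ⟨k, hk⟩ := Finset.card_eq_one.mp h1
    have hke : k ∈ e := (Finset.mem_sdiff.mp (hk ▸ Finset.mem_singleton_self k)).1
    refine ⟨k, hke, ?_⟩
    have h2 : e' = e \ (e \ e') := (sdiff_sdiff_eq_self hsub).symm
    rw [Finset.erase_eq, ← hk, ← h2]
  have hAmeas : MeasurableSet A := by
    rw [hA]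
    exact Finset.measurableSet_biInter _ fun e' he' => (hF e' he').1
  have hgmeas : ∀ k, Measurable (g k) := by
    intro k
    rw [hgdef]
    simp only
    split_ifs with hk
    · exact Measurable.indicator measurable_const (hF _ (hbdry_mem k hk)).1
    · exact measurable_const
  have hgb : ∀ k x, |g k x| ≤ 1 := by
    intro k x
    rw [hgdef]
    simp only
    split_ifs with hk
    · by_cases hx : x ∈ F (e.erase k) <;> simp [Set.indicator_apply, hx]
    · simp
  have hginv : ∀ k ∈ e, ∀ (x : ∀ i, X i) (t : X k),
      g k (Function.update x k t) = g k x := by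
    intro k hk x t
    rw [hgdef]
    simp only [if_pos hk]
    have hmem := (hF _ (hbdry_mem k hk)).2 (Function.update x k t) x
      (fun i hi => Function.update_of_ne (Finset.ne_of_mem_erase hi) t x)
    simp only [Set.indicator_apply]
    exact if_congr hmem rfl rfl
  -- box integral facts
  have hbox_eq : ∀ z, Phi e f g e z
      = ∏ S ∈ e.powerset, f (fun i => if i ∈ S then z.2 i else z.1 i) := by
    intro z
    rw [Phi, Finset.sdiff_self]
    refine Finset.prod_congr rfl fun S _ => ?_
    rw [Finset.prod_empty, mul_one]
    rfl
  have hLe : ∫⁻ z, Lfun f e z ∂(M2 μ) ≠ ⊤ := by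
    have h2 := hbox.2
    rw [hasFiniteIntegral_def] at h2
    refine ne_of_lt (lt_of_le_of_lt (le_of_eq ?_) h2)
    refine lintegral_congr fun z => ?_
    rw [Lfun, ← ENNReal.coe_finset_prod, ← nnnorm_prod]
    rfl
  -- J ∅ = ∫_A f
  have hempty : ∫ z, Phi e f g ∅ z ∂(M2 μ) = ∫ x in A, f x ∂(Measure.pi μ) := by
    have hPhi0 : ∀ z, Phi e f g ∅ z = A.indicator f z.1 := by
      intro z
      rw [Phi, Finset.powerset_empty, Finset.prod_singleton, Finset.sdiff_empty, mrg_empty]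
      by_cases hz : z.1 ∈ A
      · have hone : ∀ k ∈ e, g k z.1 = 1 := by
          intro k hk
          have hzF : z.1 ∈ F (e.erase k) := by
            rw [hA] at hz
            exact Set.mem_iInter₂.mp hz (e.erase k) (hbdry_mem k hk)
          rw [hgdef]
          simp [Set.indicator_of_mem hzF, hk]
        rw [Finset.prod_eq_one hone, mul_one, Set.indicator_of_mem hz]
      · obtain ⟨e', he', hz'⟩ : ∃ e' ∈ bdry e, z.1 ∉ F e' := by
          by_contra hcon
          push_neg at hcon
          exact hz (by rw [hA]; exact Set.mem_iInter₂.mpr hcon)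
        obtain ⟨k, hk, rfl⟩ := hbdry_eq e' he'
        have hzero : g k z.1 = 0 := by
          rw [hgdef]
          simp [Set.indicator_of_notMem hz', hk]
        rw [Finset.prod_eq_zero hk hzero, mul_zero, Set.indicator_of_notMem hz]
    have hfst : MeasurePreserving (Prod.fst) (M2 μ) (Measure.pi μ) :=
      ⟨measurable_fst, by simp [Measure.map_fst_prod]⟩
    calc ∫ z, Phi e f g ∅ z ∂(M2 μ) = ∫ z, A.indicator f z.1 ∂(M2 μ) :=
          integral_congr_ae (Filter.Eventually.of_forall hPhi0)
      _ = ∫ x, A.indicator f x ∂(Measure.pi μ) :=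
          mp_integral hfst (hfint.indicator hAmeas).aestronglyMeasurable
      _ = ∫ x in A, f x ∂(Measure.pi μ) := integral_indicator hAmeas
  set B := ∫ z : (∀ i, X i) × (∀ i, X i),
      ∏ S ∈ e.powerset, f (fun i => if i ∈ S then z.2 i else z.1 i) ∂(M2 μ) with hBdef
  have hJe : ∫ z, Phi e f g e z ∂(M2 μ) = B :=
    integral_congr_ae (Filter.Eventually.of_forall hbox_eq)
  have hBnonneg : 0 ≤ B := by
    obtain ⟨j, hj⟩ : e.Nonempty := Finset.card_pos.mp (by omega)
    have hstep := J_step μ hfmeas hLe hgmeas hgb hginv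
      (T := e.erase j) (Finset.erase_subset j e) hj (Finset.notMem_erase j e)
    rw [Finset.insert_erase hj] at hstep
    calc (0:ℝ) ≤ (∫ z, Phi e f g (e.erase j) z ∂(M2 μ)) ^ 2 := sq_nonneg _
      _ ≤ ∫ z, Phi e f g e z ∂(M2 μ) := hstep
      _ = B := hJe
  have main : ∀ d : ℕ, ∀ T ⊆ e, e.card - T.card = d →
      |∫ z, Phi e f g T z ∂(M2 μ)| ^ (2 ^ d) ≤ B := by
    intro d
    induction d with
    | zero =>
      intro T hT h0
      have hcd : e.card ≤ T.card := by omega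
      have hTeq : T = e := Finset.eq_of_subset_of_card_le hT hcd
      rw [hTeq, pow_zero, pow_one, hJe, abs_of_nonneg hBnonneg]
    | succ d ih =>
      intro T hT hd
      have hTe : T ≠ e := by
        intro h
        rw [h] at hd
        omega
      obtain ⟨j, hje, hjT⟩ := Finset.exists_of_ssubset (hT.ssubset_of_ne hTe)
      have hstep := J_step μ hfmeas hLe hgmeas hgb hginv hT hje hjT
      have hcard : T.card < e.card := Finset.card_lt_card (hT.ssubset_of_ne hTe)
      have hins := ih (insert j T) (Finset.insert_subset hje hT)
        (by rw [Finset.card_insert_of_notMem hjT]; omega)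
      calc |∫ z, Phi e f g T z ∂(M2 μ)| ^ (2 ^ (d+1))
          = ((∫ z, Phi e f g T z ∂(M2 μ)) ^ 2) ^ (2 ^ d) := by
            rw [pow_succ', pow_mul, sq_abs]
        _ ≤ (∫ z, Phi e f g (insert j T) z ∂(M2 μ)) ^ (2 ^ d) :=
            pow_le_pow_left₀ (sq_nonneg _) hstep _
        _ ≤ |∫ z, Phi e f g (insert j T) z ∂(M2 μ)| ^ (2 ^ d) := by
            rw [← abs_pow]
            exact le_abs_self _
        _ ≤ B := hins
  have final := main e.card ∅ (Finset.empty_subset e) (by simp)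
  rw [hempty] at final
  -- final : |∫_A f| ^ (2 ^ e.card) ≤ B
  set a := |∫ x in A, f x ∂(Measure.pi μ)| with hadef
  have ha : 0 ≤ a := abs_nonneg _
  set N : ℕ := 2 ^ e.card with hNdef
  have hNpos : 0 < (N:ℝ) := by positivity
  have key : a ≤ B ^ ((1:ℝ) / (N:ℝ)) := by
    have h1 : a = ((a ^ N : ℝ)) ^ ((1:ℝ) / (N:ℝ)) := by
      rw [← Real.rpow_natCast a N, ← Real.rpow_mul ha, mul_one_div,
        div_self (ne_of_gt hNpos), Real.rpow_one]
    rw [h1]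
    exact Real.rpow_le_rpow (pow_nonneg ha N) final (by positivity)
  have hcast : ((1:ℝ) / 2 ^ e.card) = (1:ℝ) / (N:ℝ) := by
    rw [hNdef]
    push_cast
    ring
  rw [hcast]
  exact key
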